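/- Let G be a finite simple graph and let M be a matching in G. Then G admits an edge 2-coloring in which every edge of M receives its own distinct color and, for each connected component of G − M containing at least one edge, all edges of that component receive one common fresh color. Consequently, OPT(G) ≥ |M| + (the number of connected components of G − M that contain at least one edge). -/
import Mathlib


open SimpleGraph

/-- `C` is an edge 2-coloring of `G`: for every vertex, the edges incident to it
carry at most 2 distinct colors. -/
def IsEdge2Coloring {V : Type*} (G : SimpleGraph V) (C : Sym2 V → ℕ) : Prop :=
  ∀ v : V, (C '' G.incidenceSet v).ncard ≤ 2

/-- The number of distinct colors used by a coloring `C` on the edges of `G`. -/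
noncomputable def numColors {V : Type*} (G : SimpleGraph V) (C : Sym2 V → ℕ) : ℕ :=
  (C '' G.edgeSet).ncard

/-- `OPT G`: the maximum number of colors used by an edge 2-coloring of `G`. -/
noncomputable def OPT {V : Type*} (G : SimpleGraph V) : ℕ :=
  sSup {n : ℕ | ∃ C : Sym2 V → ℕ, IsEdge2Coloring G C ∧ numColors G C = n}

/-- `M` is a matching of `G`, given as a set of edges: the edges belong to `G` and
are pairwise vertex-disjoint. -/
def IsMatchingSet {V : Type*} (G : SimpleGraph V) (M : Set (Sym2 V)) : Prop :=
  M ⊆ G.edgeSet ∧ ∀ e ∈ M, ∀ f ∈ M, e ≠ f → ∀ v : V, v ∈ e → v ∉ f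

/-- `ALG G M`: number of colors produced by the matching based algorithm, i.e.
`|M|` plus the number of connected components of `G − M`. -/
noncomputable def ALG {V : Type*} (G : SimpleGraph V) (M : Set (Sym2 V)) : ℕ :=
  M.ncard + Nat.card (G.deleteEdges M).ConnectedComponent

/-- `H` is a characteristic subgraph of `G` with respect to the coloring `C`:
a subgraph of `G` containing exactly one edge of each color used by `C`. -/
def IsCharSubgraph {V : Type*} (G : SimpleGraph V) (C : Sym2 V → ℕ)
    (H : SimpleGraph V) : Prop :=
  H ≤ G ∧ ∀ c ∈ C '' G.edgeSet, ∃! e, e ∈ H.edgeSet ∧ C e = c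

/-- Any matching `M` of `G` extends to an edge 2-coloring giving each edge of `M` its own
color and each edge-containing component of `G − M` a common fresh color; consequently
`OPT(G) ≥ |M| +` (number of components of `G − M` containing an edge). -/
theorem matching_coloring_lower_bound {V : Type*} [Fintype V] (G : SimpleGraph V)
    (M : Set (Sym2 V)) (hM : IsMatchingSet G M) :
    (∃ C : Sym2 V → ℕ, IsEdge2Coloring G C ∧
      (∀ e ∈ M, ∀ f ∈ M, C e = C f → e = f) ∧
      (∀ e ∈ M, ∀ f ∈ G.edgeSet, f ∉ M → C e ≠ C f) ∧
      (∀ a b a' b' : V, (G.deleteEdges M).Adj a b → (G.deleteEdges M).Adj a' b' →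
        ((G.deleteEdges M).Reachable a a' ↔ C s(a, b) = C s(a', b')))) ∧
    M.ncard + Nat.card {c : (G.deleteEdges M).ConnectedComponent //
      ∃ a b : V, (G.deleteEdges M).Adj a b ∧ (G.deleteEdges M).connectedComponentMk a = c}
      ≤ OPT G := by
  classical
  set G' := G.deleteEdges M with hG'
  obtain ⟨fM, hfM⟩ := Countable.exists_injective_nat (Sym2 V)
  obtain ⟨fK, hfK⟩ := Countable.exists_injective_nat G'.ConnectedComponent
  set C : Sym2 V → ℕ := fun e =>
    if e ∈ M then 2 * fM e + 2
    else 2 * fK (G'.connectedComponentMk e.out.1) + 1 with hCdef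
  -- the component of any member of an edge of G'
  have hmemcc : ∀ (e : Sym2 V), e ∈ G'.edgeSet → ∀ x ∈ e, ∀ y ∈ e,
      G'.connectedComponentMk x = G'.connectedComponentMk y := by
    intro e
    induction e using Sym2.ind with
    | _ a b =>
      intro he x hx y hy
      rw [SimpleGraph.mem_edgeSet] at he
      rw [Sym2.mem_iff] at hx hy
      have hr : ∀ z ∈ ({a, b} : Set V), G'.connectedComponentMk z = G'.connectedComponentMk a := by
        rintro z (rfl | rfl)
        · rfl
        · exact (SimpleGraph.ConnectedComponent.eq).mpr he.symm.reachable
      calc G'.connectedComponentMk x = G'.connectedComponentMk a := by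
            rcases hx with rfl | rfl
            · rfl
            · exact (SimpleGraph.ConnectedComponent.eq).mpr he.symm.reachable
        _ = G'.connectedComponentMk y := by
            rcases hy with rfl | rfl
            · rfl
            · exact ((SimpleGraph.ConnectedComponent.eq).mpr he.symm.reachable).symm
  have hCadj : ∀ a b : V, G'.Adj a b → C s(a, b) = 2 * fK (G'.connectedComponentMk a) + 1 := by
    intro a b hab
    have hnM : s(a, b) ∉ M := by
      rw [hG', SimpleGraph.deleteEdges_adj] at hab
      exact hab.2
    have he : s(a, b) ∈ G'.edgeSet := hab
    have := hmemcc s(a, b) he (s(a, b)).out.1 (Sym2.out_fst_mem _) a (by simp)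
    simp only [hCdef, if_neg hnM, this]
  -- C restricted to edges of G' is determined by the component
  -- injectivity / parity facts
  have hCM : ∀ e ∈ M, C e = 2 * fM e + 2 := fun e he => by simp [hCdef, he]
  -- main properties
  have hprop2 : ∀ e ∈ M, ∀ f ∈ M, C e = C f → e = f := by
    intro e he f hf h
    rw [hCM e he, hCM f hf] at h
    exact hfM (by omega)
  have hprop3 : ∀ e ∈ M, ∀ f ∈ G.edgeSet, f ∉ M → C e ≠ C f := by
    intro e he f _ hfM' h
    rw [hCM e he] at h
    simp only [hCdef, if_neg hfM'] at h
    omega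
  have hprop4 : ∀ a b a' b' : V, G'.Adj a b → G'.Adj a' b' →
      (G'.Reachable a a' ↔ C s(a, b) = C s(a', b')) := by
    intro a b a' b' hab hab'
    rw [hCadj a b hab, hCadj a' b' hab']
    constructor
    · intro h
      rw [(SimpleGraph.ConnectedComponent.eq).mpr h]
    · intro h
      have : fK (G'.connectedComponentMk a) = fK (G'.connectedComponentMk a') := by omega
      exact (SimpleGraph.ConnectedComponent.eq).mp (hfK this)
  -- 2-coloring
  have hcol : IsEdge2Coloring G C := by
    intro v
    have hsub : C '' G.incidenceSet v ⊆
        C '' (M ∩ G.incidenceSet v) ∪ {2 * fK (G'.connectedComponentMk v) + 1} := by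
      rintro c ⟨e, he, rfl⟩
      by_cases heM : e ∈ M
      · exact Or.inl ⟨e, ⟨heM, he⟩, rfl⟩
      · right
        have heG' : e ∈ G'.edgeSet := by
          rw [hG', SimpleGraph.edgeSet_deleteEdges]
          exact ⟨he.1, heM⟩
        have hv : v ∈ e := he.2
        have := hmemcc e heG' e.out.1 (Sym2.out_fst_mem _) v hv
        simp only [hCdef, if_neg heM, this, Set.mem_singleton_iff]
    calc (C '' G.incidenceSet v).ncard
        ≤ (C '' (M ∩ G.incidenceSet v) ∪ {2 * fK (G'.connectedComponentMk v) + 1}).ncard :=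
          Set.ncard_le_ncard hsub (by
            apply Set.Finite.union _ (Set.finite_singleton _)
            exact ((Set.toFinite _).inter_of_left _).image _)
      _ ≤ (C '' (M ∩ G.incidenceSet v)).ncard + ({2 * fK (G'.connectedComponentMk v) + 1} : Set ℕ).ncard :=
          Set.ncard_union_le _ _
      _ ≤ 1 + 1 := by
          gcongr
          · rw [Set.ncard_le_one_iff (((Set.toFinite _).inter_of_left _).image _)]
            rintro c d ⟨e, ⟨heM, hev⟩, rfl⟩ ⟨f, ⟨hfM', hfv⟩, rfl⟩
            congr 1
            by_contra hne
            exact hM.2 e heM f hfM' hne v hev.2 hfv.2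
          · simp [Set.ncard_singleton]
      _ = 2 := rfl
  refine ⟨⟨C, hcol, hprop2, hprop3, hprop4⟩, ?_⟩
  -- now count colors
  set S : Set G'.ConnectedComponent :=
    {c | ∃ a b : V, G'.Adj a b ∧ G'.connectedComponentMk a = c} with hS
  have hsplit : G.edgeSet = M ∪ G'.edgeSet := by
    rw [hG', SimpleGraph.edgeSet_deleteEdges]
    rw [Set.union_diff_cancel' (le_refl M) hM.1]
  have himage : C '' G'.edgeSet = (fun c => 2 * fK c + 1) '' S := by
    ext c
    constructor
    · rintro ⟨e, he, rfl⟩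
      induction e using Sym2.ind with
      | _ a b =>
        rw [SimpleGraph.mem_edgeSet] at he
        exact ⟨G'.connectedComponentMk a, ⟨a, b, he, rfl⟩, (hCadj a b he).symm⟩
    · rintro ⟨k, ⟨a, b, hab, rfl⟩, rfl⟩
      exact ⟨s(a, b), hab, hCadj a b hab⟩
  have hdisj : Disjoint (C '' M) (C '' G'.edgeSet) := by
    rw [Set.disjoint_left]
    rintro c ⟨e, he, rfl⟩ ⟨f, hf, hcf⟩
    induction f using Sym2.ind with
    | _ a b =>
      rw [SimpleGraph.mem_edgeSet] at hf
      rw [hCM e he, hCadj a b hf] at hcf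
      omega
  have hnum : numColors G C = M.ncard + S.ncard := by
    rw [numColors, hsplit, Set.image_union]
    rw [Set.ncard_union_eq hdisj ((Set.toFinite _).image _) ((Set.toFinite _).image _)]
    congr 1
    · apply Set.ncard_image_of_injOn
      intro e he f hf h
      exact hprop2 e he f hf h
    · rw [himage]
      apply Set.ncard_image_of_injOn
      intro x _ y _ h
      have h' : 2 * fK x + 1 = 2 * fK y + 1 := h
      exact hfK (by omega)
  have hScard : Nat.card {c : G'.ConnectedComponent //
      ∃ a b : V, G'.Adj a b ∧ G'.connectedComponentMk a = c} = S.ncard := by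
    rw [← Nat.card_coe_set_eq]
    rfl
  rw [hScard, ← hnum]
  -- OPT bound
  apply le_csSup
  · refine ⟨Nat.card (Sym2 V), ?_⟩
    rintro n ⟨C', _, rfl⟩
    calc numColors G C' ≤ G.edgeSet.ncard := Set.ncard_image_le (Set.toFinite _)
      _ ≤ (Set.univ : Set (Sym2 V)).ncard := Set.ncard_le_ncard (Set.subset_univ _) (Set.toFinite _)
      _ = Nat.card (Sym2 V) := Set.ncard_univ _
  · exact ⟨C, hcol, rfl⟩
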